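/- Let F_r be a free group of rank r and h ∈ F_r a nontrivial element whose image in the abelianization F_r/[F_r,F_r] is not primitive (i.e., h ∈ [F_r,F_r], or h ≡ f₁^{k₁}···f_r^{k_r} with gcd(k₁,…,k_r) = d > 1). Then the cyclic subgroup ⟨h⟩ is not verbally closed in F_r. -/

import Mathlib

/-- `H` is verbally closed in `G`: for every word `w` and `h ∈ H`, if the
equation `w(x₁,…,xₙ) = h` has a solution in `G` then it has one in `H`. -/
def VerballyClosedIn {G : Type*} [Group G] (H : Subgroup G) : Prop :=
  ∀ (n : ℕ) (w : FreeGroup (Fin n)) (h : G), h ∈ H →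
    (∃ x : Fin n → G, FreeGroup.lift x w = h) →
    (∃ x : Fin n → G, (∀ j, x j ∈ H) ∧ FreeGroup.lift x w = h)
/-- The exponent sum of the `i`-th generator in an element of the free group. -/
noncomputable def expSum {r : ℕ} (i : Fin r) (h : FreeGroup (Fin r)) : ℤ :=
  Multiplicative.toAdd
    (FreeGroup.lift (fun j => Multiplicative.ofAdd (if j = i then (1 : ℤ) else 0)) h)

lemma expSum_key {r : ℕ} (m : Fin r → ℤ) (w : FreeGroup (Fin r)) :
    Multiplicative.toAdd (FreeGroup.lift (fun j => Multiplicative.ofAdd (m j)) w)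
      = ∑ i, m i * expSum i w := by
  induction w using FreeGroup.induction_on with
  | C1 => simp [expSum]
  | of x =>
      show Multiplicative.toAdd ((FreeGroup.lift fun j => Multiplicative.ofAdd (m j)) (FreeGroup.of x)) = ∑ i, m i * expSum i (FreeGroup.of x)
      have h1 : ∀ i : Fin r, expSum i (FreeGroup.of x) = if x = i then 1 else 0 := by
        intro i; simp [expSum]
      simp only [h1, FreeGroup.lift_apply_of, toAdd_ofAdd, mul_ite, mul_one, mul_zero,
        Finset.sum_ite_eq, Finset.mem_univ, if_true]
  | inv_of x ih =>
      simp only [expSum, map_inv, toAdd_inv] at *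
      rw [ih, ← Finset.sum_neg_distrib]
      exact Finset.sum_congr rfl (fun i _ => by ring)
  | mul a b iha ihb =>
      simp only [expSum, map_mul, toAdd_mul] at *
      rw [iha, ihb, ← Finset.sum_add_distrib]
      exact Finset.sum_congr rfl (fun i _ => by ring)

lemma lift_zpow {r : ℕ} {G : Type*} [Group G] (g : G) (m : Fin r → ℤ)
    (w : FreeGroup (Fin r)) :
    FreeGroup.lift (fun j => g ^ (m j)) w
      = g ^ (Multiplicative.toAdd (FreeGroup.lift (fun j => Multiplicative.ofAdd (m j)) w)) := by
  have : (FreeGroup.lift (fun j => g ^ (m j)) : FreeGroup (Fin r) →* G)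
      = (zpowersHom G g).comp (FreeGroup.lift (fun j => Multiplicative.ofAdd (m j))) := by
    apply FreeGroup.ext_hom
    intro j
    simp [zpowersHom_apply]
  rw [this]
  rfl

theorem cyclic_not_verballyClosed_of_not_primitive {r : ℕ}
    (h : FreeGroup (Fin r)) (hne : h ≠ 1)
    (hprim : Finset.univ.gcd (fun i => expSum i h) ≠ 1) :
    ¬ VerballyClosedIn (Subgroup.zpowers h) := by
  intro hVC
  have hsol : ∃ x : Fin r → FreeGroup (Fin r), FreeGroup.lift x h = h := by
    refine ⟨FreeGroup.of, ?_⟩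
    have : (FreeGroup.lift (FreeGroup.of : Fin r → FreeGroup (Fin r)))
        = MonoidHom.id _ := FreeGroup.ext_hom _ _ (by simp)
    rw [this]; rfl
  obtain ⟨x, hxH, hx⟩ := hVC r h h (Subgroup.mem_zpowers h) hsol
  choose m hm using fun j => Subgroup.mem_zpowers_iff.mp (hxH j)
  have h2 : FreeGroup.lift x h = h ^ (∑ i, m i * expSum i h) := by
    have hxf : x = fun j => h ^ m j := funext fun j => (hm j).symm
    rw [hxf, lift_zpow, expSum_key]
  have hxe : h ^ (∑ i, m i * expSum i h) = h := h2.symm.trans hx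
  have hdk : ∀ i, Finset.univ.gcd (fun i => expSum i h) ∣ expSum i h :=
    fun i => Finset.gcd_dvd (Finset.mem_univ i)
  by_cases hall : ∀ i, expSum i h = 0
  · have : (∑ i, m i * expSum i h) = 0 := by simp [hall]
    rw [this] at hxe
    exact hne (by simpa using hxe.symm)
  · push_neg at hall
    obtain ⟨i, hi⟩ := hall
    have hek : (∑ j, m j * expSum j h) * expSum i h = expSum i h := by
      have := congrArg (expSum i) hxe
      simpa [expSum, map_zpow, smul_eq_mul] using this
    have he1 : (∑ j, m j * expSum j h) = 1 :=
      mul_right_cancel₀ hi (hek.trans (one_mul (expSum i h)).symm)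
    have hde : Finset.univ.gcd (fun i => expSum i h) ∣ 1 := by
      rw [← he1]
      exact Finset.dvd_sum fun j _ => (hdk j).mul_left _
    exact hprim ((Finset.normalize_gcd).symm.trans
      (normalize_eq_one.mpr (isUnit_of_dvd_one hde)))
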